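/- arXiv:1802.10117 — 2 statements merged into one kernel-verified Lean document; each statement's English description precedes it below -/
import Mathlib

section
/- In the no-C-market regime, the price P_B(θ) = φ(π + (1-π)(1-θ)) / ((2-θ(1-π))(φπ + (1-π)(1-θ))) is strictly increasing in θ on (0, θ₀]. -/
noncomputable def theta0 (π φ : ℝ) : ℝ :=
  (1 - Real.sqrt (1 - 4*(1-π)*π*(1-φ))) / (2*(1-π))

theorem PB_strict_mono_noC
    (π φ : ℝ) (hπ : π ∈ Set.Ioo (0:ℝ) 1) (hφ : φ ∈ Set.Ioo (0:ℝ) 1)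
    (hdisc : π * (1 - π) * (1 - φ) < 1/4) :
    StrictMonoOn
      (fun θ : ℝ =>
        φ * (π + (1-π)*(1-θ)) / ((2 - θ*(1-π)) * (φ*π + (1-π)*(1-θ))))
      (Set.Ioc (0:ℝ) (theta0 π φ)) := by
  obtain ⟨hπ0, hπ1⟩ := hπ
  obtain ⟨hφ0, hφ1⟩ := hφ
  -- theta0 < 1
  have hD : (0:ℝ) < 1 - 4*(1-π)*π*(1-φ) := by nlinarith
  have hsqrt : 2*π - 1 < Real.sqrt (1 - 4*(1-π)*π*(1-φ)) := by
    rcases lt_or_ge (2*π - 1) 0 with h | h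
    · exact h.trans_le (Real.sqrt_nonneg _)
    · rw [show (2*π - 1) = Real.sqrt ((2*π-1)^2) by
        rw [Real.sqrt_sq h]]
      apply Real.sqrt_lt_sqrt (by positivity)
      nlinarith [mul_pos (mul_pos hπ0 hφ0) (show (0:ℝ) < 1-π by linarith)]
  have hθ1 : theta0 π φ < 1 := by
    rw [theta0, div_lt_one (by linarith)]
    linarith
  intro a ha b hb hab
  obtain ⟨ha0, haθ⟩ := ha
  obtain ⟨hb0, hbθ⟩ := hb
  have hb1 : b < 1 := lt_of_le_of_lt hbθ hθ1
  have ha1 : a < 1 := hab.trans hb1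
  set u : ℝ := (1-π)*(1-a) with hu
  set v : ℝ := (1-π)*(1-b) with hv
  have hv0 : 0 < v := by apply mul_pos <;> linarith
  have huv : v < u := by
    apply mul_lt_mul_of_pos_left _ (by linarith : (0:ℝ) < 1-π)
    linarith
  have hDa : 0 < (2 - a*(1-π)) * (φ*π + (1-π)*(1-a)) := by
    apply mul_pos
    · nlinarith
    · have : 0 < φ*π := mul_pos hφ0 hπ0
      nlinarith
  have hDb : 0 < (2 - b*(1-π)) * (φ*π + (1-π)*(1-b)) := by
    apply mul_pos
    · nlinarith
    · have : 0 < φ*π := mul_pos hφ0 hπ0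
      nlinarith
  simp only
  rw [div_lt_div_iff₀ hDa hDb]
  have key : 0 < φ*(u-v)*(π*(1+π)*(1-φ)+φ*π^2+π*(u+v)+u*v) := by
    apply mul_pos (mul_pos hφ0 (by linarith))
    have hu0 : 0 < u := hv0.trans huv
    have h1 : 0 < π*(1+π)*(1-φ) := by
      apply mul_pos (mul_pos hπ0 (by linarith)) (by linarith)
    have h2 : 0 < φ*π^2 := by positivity
    have h3 : 0 < π*(u+v) := mul_pos hπ0 (by linarith)
    have h4 : 0 < u*v := mul_pos hu0 hv0
    linarith
  have hident : φ * (π + (1-π)*(1-b)) * ((2 - a*(1-π)) * (φ*π + (1-π)*(1-a)))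
      - φ * (π + (1-π)*(1-a)) * ((2 - b*(1-π)) * (φ*π + (1-π)*(1-b)))
      = φ*(u-v)*(π*(1+π)*(1-φ)+φ*π^2+π*(u+v)+u*v) := by
    simp only [hu, hv]; ring
  linarith [key, hident]
end

section
/- Define Q(s) = ((π+s)/(1+π+s))² · φ/(φπ + s) for s = (1-π)(1-θ). If θ ≤ θ₀, where θ₀ is the smaller root of θ²(1-π)-θ+π(1-φ)=0, then dQ/dθ > 0. -/
theorem Q_deriv_pos_noC
    (π φ : ℝ) (hπ : π ∈ Set.Ioo (0:ℝ) 1) (hφ : φ ∈ Set.Ioo (0:ℝ) 1)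
    (hdisc : π * (1 - π) * (1 - φ) < 1/4)
    (θ : ℝ) (hθ0 : 0 < θ) (hθ : θ ≤ theta0 π φ) :
    0 < deriv (fun θ : ℝ =>
        ((π + (1-π)*(1-θ)) / (1 + π + (1-π)*(1-θ)))^2 *
          (φ / (φ*π + (1-π)*(1-θ)))) θ := by
  obtain ⟨hπ0, hπ1⟩ := hπ
  obtain ⟨hφ0, hφ1⟩ := hφ
  set D := Real.sqrt (1 - 4*(1-π)*π*(1-φ)) with hDdef
  have hD0 : 0 ≤ D := Real.sqrt_nonneg _
  have hD2 : D^2 = 1 - 4*(1-π)*π*(1-φ) := by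
    rw [hDdef, Real.sq_sqrt]; nlinarith
  have h1π : 0 < 1 - π := by linarith
  have hθb : 2*(1-π)*θ ≤ 1 - D := by
    have h := hθ
    rw [theta0, le_div_iff₀ (by positivity : (0:ℝ) < 2*(1-π))] at h
    nlinarith [h]
  -- g(θ) ≥ 0
  have hg : 0 ≤ (1-π)*θ^2 - θ + π*(1-φ) := by
    nlinarith [sq_nonneg (1 - 2*(1-π)*θ - D), sq_nonneg (1 - 2*(1-π)*θ + D)]
  set a := π + (1-π)*(1-θ) with hadef
  set b := 1 + π + (1-π)*(1-θ) with hbdef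
  set c := φ*π + (1-π)*(1-θ) with hcdef
  have hc : 0 < c := by
    have hDgt : 2*π*(1-φ) - 1 < D := by
      nlinarith [sq_nonneg (D - (2*π*(1-φ)-1)), sq_nonneg (D + (2*π*(1-φ)-1)), mul_pos (mul_pos hπ0 hφ0) (mul_pos hπ0 (by linarith : (0:ℝ) < 1 - φ))]
    rw [hcdef]; nlinarith
  have ha : 0 < a := by rw [hadef]; nlinarith [hc]
  have hb : 0 < b := by rw [hbdef]; nlinarith [ha]
  have hkey : 0 < a*b - 2*c := by
    rw [hadef, hbdef, hcdef]
    nlinarith [hg, mul_pos hπ0 (by linarith : (0:ℝ) < 1 - φ)]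
  -- derivative computation
  have hs : HasDerivAt (fun t : ℝ => (1-π)*(1-t)) (-(1-π)) θ := by
    have := ((hasDerivAt_id θ).const_sub 1).const_mul (1-π)
    simpa using this
  have hu : HasDerivAt (fun t : ℝ => π + (1-π)*(1-t)) (-(1-π)) θ := hs.const_add π
  have hv : HasDerivAt (fun t : ℝ => 1 + π + (1-π)*(1-t)) (-(1-π)) θ := hs.const_add (1+π)
  have hw : HasDerivAt (fun t : ℝ => φ*π + (1-π)*(1-t)) (-(1-π)) θ := hs.const_add (φ*π)
  have h1 : HasDerivAt (fun t : ℝ => (π + (1-π)*(1-t)) / (1 + π + (1-π)*(1-t)))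
      ((-(1-π)*b - a*(-(1-π)))/b^2) θ := hu.div hv (ne_of_gt hb)
  have h2 := h1.pow 2
  have h3 : HasDerivAt (fun t : ℝ => φ / (φ*π + (1-π)*(1-t)))
      ((0*c - φ*(-(1-π)))/c^2) θ := (hasDerivAt_const θ φ).div hw (ne_of_gt hc)
  have h4 := h2.mul h3
  rw [show deriv (fun θ : ℝ => ((π + (1-π)*(1-θ)) / (1 + π + (1-π)*(1-θ)))^2 * (φ / (φ*π + (1-π)*(1-θ)))) θ = _ from h4.deriv]
  have hgoal : 0 < (1-π)*φ*a*(a*b - 2*c)/(b^3*c^2) := by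
    apply div_pos
    · exact mul_pos (mul_pos (mul_pos h1π hφ0) ha) hkey
    · positivity
  calc (0:ℝ) < (1-π)*φ*a*(a*b - 2*c)/(b^3*c^2) := hgoal
    _ = _ := by simp only [Pi.pow_apply, ← hadef, ← hbdef, ← hcdef]; norm_num; field_simp; ring
end
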